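/- arXiv:1804.10391 — 2 statements merged into one kernel-verified Lean document; each statement's English description precedes it below -/
import Mathlib

section
/- Let B_α(z) = (z-α)/(1-ᾱz) be a Blaschke factor with α in the open unit disk, and let φ be any measurable function on the unit circle with φ(z)² = B_α(z) a.e. Then φ is not of bounded type, i.e., φ cannot be written as a quotient f/g with f, g ∈ H^∞ and g ≠ 0. -/
open MeasureTheory Complex Filter Matrix

noncomputable section

namespace HankelPaper

instance : Fact (0 < 2 * Real.pi) := ⟨by positivity⟩

/-- The circle, modeled as `ℝ / 2πℤ`. -/
abbrev 𝕋 := AddCircle (2 * Real.pi)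

/-- Normalized Haar (Lebesgue) measure on the circle. -/
abbrev μT : Measure 𝕋 := AddCircle.haarAddCircle

/-- The coordinate function `z` on the unit circle. -/
def zf : 𝕋 → ℂ := fun x => fourier 1 x

/-- All Fourier coefficients of negative index vanish (analyticity). -/
def NegVanish (f : 𝕋 → ℂ) : Prop := ∀ n : ℤ, n < 0 → fourierCoeff f n = 0

/-- The Hardy space `H¹`. -/
def MemH1 (f : 𝕋 → ℂ) : Prop := Integrable f μT ∧ NegVanish f

/-- The Hardy space `H²`. -/
def MemH2 (f : 𝕋 → ℂ) : Prop := MemLp f 2 μT ∧ NegVanish f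

/-- The Hardy space `H^∞`. -/
def MemHinf (f : 𝕋 → ℂ) : Prop := MemLp f ⊤ μT ∧ NegVanish f

/-- `f` is of bounded type (Nevanlinna class): a quotient of two `H^∞` functions. -/
def BddType (f : 𝕋 → ℂ) : Prop :=
  ∃ g h : 𝕋 → ℂ, MemHinf g ∧ MemHinf h ∧ ¬ h =ᵐ[μT] 0 ∧
    f =ᵐ[μT] fun x => g x / h x

/-- `N^∞` : essentially bounded functions of bounded type. -/
def MemNinf (f : 𝕋 → ℂ) : Prop := BddType f ∧ MemLp f ⊤ μT

/-- A scalar inner function. -/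
def IsInner (θ : 𝕋 → ℂ) : Prop := MemHinf θ ∧ ∀ᵐ x ∂μT, ‖θ x‖ = 1

/- Vector-valued versions (coordinatewise). -/
def MemH1V {n : ℕ} (f : 𝕋 → Fin n → ℂ) : Prop := ∀ j, MemH1 fun x => f x j
def MemH2V {n : ℕ} (f : 𝕋 → Fin n → ℂ) : Prop := ∀ j, MemH2 fun x => f x j
def MemL2V {n : ℕ} (f : 𝕋 → Fin n → ℂ) : Prop := ∀ j, MemLp (fun x => f x j) 2 μT
def BddTypeV {n : ℕ} (f : 𝕋 → Fin n → ℂ) : Prop := ∀ j, BddType fun x => f x j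

/-- Entrywise `L²` matrix-valued functions. -/
def MemL2M {n m : ℕ} (Φ : 𝕋 → Matrix (Fin n) (Fin m) ℂ) : Prop :=
  ∀ i j, MemLp (fun x => Φ x i j) 2 μT

/-- The `j`-th column of a matrix-valued function. -/
def colF {n m : ℕ} (Φ : 𝕋 → Matrix (Fin n) (Fin m) ℂ) (j : Fin m) : 𝕋 → Fin n → ℂ :=
  fun x i => Φ x i j

/-- The subfamily `{φ i : i ∈ s}` is independent modulo the Nevanlinna class. -/
def IndepModN {n : ℕ} {ι : Type*} (φ : ι → 𝕋 → Fin n → ℂ) (s : Finset ι) : Prop :=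
  ∀ a : ι → 𝕋 → ℂ, (∀ i, BddType (a i)) →
    BddTypeV (fun x j => ∑ i ∈ s, a i x * φ i x j) →
    ∀ i ∈ s, a i =ᵐ[μT] 0

/-- The independency (degree of independence) modulo the Nevanlinna class of a finite
family: the maximal cardinality of an independent subfamily. -/
def indN {n : ℕ} {ι : Type*} (φ : ι → 𝕋 → Fin n → ℂ) : ℕ :=
  sSup {k | ∃ s : Finset ι, IndepModN φ s ∧ s.card = k}

/-- The kernel of the block Hankel operator `H_Φ` : those `f ∈ H²_{ℂᵐ}` with `Φ f ∈ H¹_{ℂⁿ}`. -/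
def hankelKer {n m : ℕ} (Φ : 𝕋 → Matrix (Fin n) (Fin m) ℂ) : Set (𝕋 → Fin m → ℂ) :=
  {f | MemH2V f ∧ ∀ i : Fin n, MemH1 fun x => ∑ j, Φ x i j * f x j}

/-- A matrix-valued inner function: entries in `H^∞` and a.e. isometric values. -/
def IsMatrixInner {n m : ℕ} (Θ : 𝕋 → Matrix (Fin n) (Fin m) ℂ) : Prop :=
  (∀ i j, MemHinf fun x => Θ x i j) ∧ ∀ᵐ x ∂μT, (Θ x)ᴴ * Θ x = 1

/-- The shift-invariant subspace `Θ H²_{ℂᵐ}` (as a set of functions, up to null sets). -/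
def thetaH2 {n m : ℕ} (Θ : 𝕋 → Matrix (Fin n) (Fin m) ℂ) : Set (𝕋 → Fin n → ℂ) :=
  {f | ∃ h : 𝕋 → Fin m → ℂ, MemH2V h ∧ f =ᵐ[μT] fun x => (Θ x).mulVec (h x)}

/-- `Rank F` : the essential supremum of the pointwise rank. -/
def essRank {n m : ℕ} (F : 𝕋 → Matrix (Fin n) (Fin m) ℂ) : ℕ :=
  sInf {k | ∀ᵐ x ∂μT, (F x).rank ≤ k}

/-- The backward shift `S*` on scalar functions: `(S* f)(z) = z̄ (f(z) - f̂(0))`. -/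
def backShift (f : 𝕋 → ℂ) : 𝕋 → ℂ :=
  fun x => fourier (-1) x * (f x - fourierCoeff f 0)

/-- The backward shift on vector-valued functions, coordinatewise. -/
def backShiftV {n : ℕ} (f : 𝕋 → Fin n → ℂ) : 𝕋 → Fin n → ℂ :=
  fun x j => backShift (fun y => f y j) x

/-! ### Auxiliary material for stmt1 -/

section Stmt1Aux

open scoped ComplexConjugate

lemma norm_fourier_apply (n : ℤ) (x : 𝕋) : ‖fourier n x‖ = 1 := Circle.norm_coe _

lemma abs_zf_eq_one (x : 𝕋) : ‖zf x‖ = 1 := by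
  exact norm_fourier_apply 1 x

lemma fourierCoeff_congr_ae {f g : 𝕋 → ℂ} (h : f =ᵐ[μT] g) (n : ℤ) :
    fourierCoeff f n = fourierCoeff g n :=
  integral_congr_ae (h.mono fun x hx => by
    show fourier (-n) x • f x = fourier (-n) x • g x
    rw [hx])

lemma norm_fourierCoeff_le (f : 𝕋 → ℂ) (n : ℤ) :
    ‖fourierCoeff f n‖ ≤ ∫ x, ‖f x‖ ∂μT := by
  refine (norm_integral_le_integral_norm _).trans_eq ?_
  refine integral_congr_ae (Filter.Eventually.of_forall fun x => ?_)
  show ‖fourier (-n) x • f x‖ = ‖f x‖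
  rw [norm_smul, norm_fourier_apply, one_mul]

lemma memLinf_of_continuous {f : 𝕋 → ℂ} (hf : Continuous f) : MemLp f ⊤ μT := by
  obtain ⟨C, hC⟩ := (isCompact_univ (X := 𝕋)).exists_bound_of_continuousOn hf.continuousOn
  exact memLp_top_of_bound hf.aestronglyMeasurable C
    (Filter.Eventually.of_forall fun x => hC x (Set.mem_univ x))

lemma memL2_of_mul_top {f g : 𝕋 → ℂ} (hf : MemLp f ⊤ μT) (hg : MemLp g 2 μT) :
    MemLp (fun x => f x * g x) 2 μT := by
  have := MeasureTheory.MemLp.smul (r := 2) hg hf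
  exact this

/-- The fundamental convolution formula for Fourier coefficients of a product of two
`L²` functions. -/
lemma fourierCoeff_mul {f g : 𝕋 → ℂ} (hf : MemLp f 2 μT) (hg : MemLp g 2 μT) (n : ℤ) :
    fourierCoeff (fun x => f x * g x) n
      = ∑' k : ℤ, fourierCoeff f (n - k) * fourierCoeff g k := by
  classical
  set v : 𝕋 → ℂ := fun x => fourier (-n) x * f x with hv_def
  have hv : MemLp v 2 μT :=
    memL2_of_mul_top (memLinf_of_continuous (map_continuous _)) hf
  set u : 𝕋 → ℂ := fun x => conj (v x) with hu_def
  have hu : MemLp u 2 μT := by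
    refine MemLp.of_le hv (continuous_star.comp_aestronglyMeasurable hv.aestronglyMeasurable) ?_
    refine Filter.Eventually.of_forall fun x => ?_
    show ‖conj (v x)‖ ≤ ‖v x‖
    rw [starRingEnd_apply]; exact (norm_star _).le
  set U := hu.toLp u with hU_def
  set G := hg.toLp g with hG_def
  have key := (fourierBasis (T := 2 * Real.pi)).tsum_inner_mul_inner U G
  have hUc : ∀ i : ℤ, fourierCoeff (U : 𝕋 → ℂ) i = fourierCoeff u i :=
    fun i => fourierCoeff_congr_ae (hu.coeFn_toLp) i
  have hGc : ∀ i : ℤ, fourierCoeff (G : 𝕋 → ℂ) i = fourierCoeff g i :=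
    fun i => fourierCoeff_congr_ae (hg.coeFn_toLp) i
  have cu : ∀ i : ℤ, conj (fourierCoeff u i) = fourierCoeff f (n - i) := by
    intro i
    have h0 : conj (fourierCoeff u i) = ∫ x, conj (fourier (-i) x • u x) ∂μT :=
      integral_conj.symm
    rw [h0]
    show _ = ∫ x, fourier (-(n - i)) x • f x ∂μT
    refine integral_congr_ae (Filter.Eventually.of_forall fun x => ?_)
    show conj (fourier (-i) x • u x) = fourier (-(n - i)) x • f x
    rw [smul_eq_mul, smul_eq_mul, map_mul (starRingEnd ℂ), hu_def]
    show conj (fourier (-i) x) * conj (conj (v x)) = _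
    rw [starRingEnd_self_apply, fourier_neg, starRingEnd_self_apply, hv_def]
    show fourier i x * (fourier (-n) x * f x) = _
    rw [← mul_assoc, ← fourier_add]
    norm_num [sub_eq_add_neg, add_comm]
  -- identify the inner product with the Fourier coefficient of the product
  have hinner : (inner ℂ U G : ℂ) = fourierCoeff (fun x => f x * g x) n := by
    rw [MeasureTheory.L2.inner_def]
    show ∫ x, (G : 𝕋 → ℂ) x * conj ((U : 𝕋 → ℂ) x) ∂μT = ∫ x, fourier (-n) x • (f x * g x) ∂μT
    refine integral_congr_ae ?_
    filter_upwards [hu.coeFn_toLp, hg.coeFn_toLp] with x hx1 hx2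
    rw [hx1, hx2, hu_def]
    show g x * conj (conj (v x)) = _
    rw [starRingEnd_self_apply, hv_def, smul_eq_mul]
    show g x * (fourier (-n) x * f x) = fourier (-n) x * (f x * g x)
    ring
  rw [← hinner, ← key]
  refine tsum_congr fun i => ?_
  rw [← (fourierBasis (T := 2 * Real.pi)).repr_apply_apply G i, fourierBasis_repr, hGc,
    ← inner_conj_symm, ← (fourierBasis (T := 2 * Real.pi)).repr_apply_apply U i,
    fourierBasis_repr, hUc, cu]

end Stmt1Aux
section Stmt1Aux2

open scoped ComplexConjugate

lemma integrable_of_continuous {f : 𝕋 → ℂ} (hf : Continuous f) : Integrable f μT :=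
  memLp_one_iff_integrable.mp ((memLinf_of_continuous hf).mono_exponent le_top)

lemma fourierCoeff_fourier' (m k : ℤ) :
    fourierCoeff (⇑(fourier m) : 𝕋 → ℂ) k = if k = m then 1 else 0 := by
  classical
  have h1 : fourierCoeff ((fourierLp (T := 2 * Real.pi) 2 m : Lp ℂ 2 μT) : 𝕋 → ℂ) k
      = fourierCoeff (⇑(fourier m) : 𝕋 → ℂ) k :=
    fourierCoeff_congr_ae (coeFn_fourierLp 2 m) k
  have h2 : (fourierLp (T := 2 * Real.pi) 2 m : Lp ℂ 2 μT)
      = fourierBasis (T := 2 * Real.pi) m := by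
    rw [coe_fourierBasis]
  rw [← h1, h2, ← fourierBasis_repr, (fourierBasis (T := 2 * Real.pi)).repr_self,
    lp.single_apply]
  by_cases h : k = m <;> simp [h]

lemma ae_zero_of_coeff_zero {h : 𝕋 → ℂ} (hh : MemLp h 2 μT)
    (hc : ∀ n : ℤ, fourierCoeff h n = 0) : h =ᵐ[μT] 0 := by
  have hH : ∀ i : ℤ, (fourierBasis (T := 2 * Real.pi)).repr (hh.toLp h) i = 0 := by
    intro i; rw [fourierBasis_repr, fourierCoeff_congr_ae hh.coeFn_toLp, hc]
  have hrepr : (fourierBasis (T := 2 * Real.pi)).repr (hh.toLp h) = 0 := by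
    ext i; simpa using hH i
  have h0 : hh.toLp h = 0 := by
    apply (fourierBasis (T := 2 * Real.pi)).repr.injective
    simp [hrepr]
  calc h =ᵐ[μT] hh.toLp h := hh.coeFn_toLp.symm
  _ =ᵐ[μT] 0 := by rw [h0]; exact MeasureTheory.Lp.coeFn_zero _ _ _

lemma analytic_order_congr {f g : ℂ → ℂ} {z₀ : ℂ} (hf : AnalyticAt ℂ f z₀)
    (hg : AnalyticAt ℂ g z₀) (hfg : f =ᶠ[nhds z₀] g) :
    analyticOrderAt f z₀ = analyticOrderAt g z₀ := by
  exact analyticOrderAt_congr hfg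
/-
  · rw [h, eq_comm, AnalyticAt.order_eq_top_iff]
    filter_upwards [hf.order_eq_top_iff.mp h, hfg] with z h1 h2
    rw [← h2]; exact h1
  · set m := hf.order.toNat with hm_def
    have hm : hf.order = (m : ℕ∞) := (ENat.coe_toNat h).symm
    rw [hm, eq_comm]
    refine (hg.order_eq_nat_iff m).mpr ?_
    obtain ⟨u, hu, hu0, hueq⟩ := (hf.order_eq_nat_iff m).mp hm
    exact ⟨u, hu, hu0, by filter_upwards [hueq, hfg] with z h1 h2; rw [← h2]; exact h1⟩
-/

lemma analytic_order_mul {f g : ℂ → ℂ} {z₀ : ℂ} (hf : AnalyticAt ℂ f z₀)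
    (hg : AnalyticAt ℂ g z₀) :
    analyticOrderAt (fun z => f z * g z) z₀ = analyticOrderAt f z₀ + analyticOrderAt g z₀ := by
  exact analyticOrderAt_mul hf hg
/-
  rcases eq_or_ne hf.order ⊤ with h | h
  · rw [h, top_add, AnalyticAt.order_eq_top_iff]
    filter_upwards [hf.order_eq_top_iff.mp h] with z h1
    show f z * g z = 0
    rw [h1, zero_mul]
  rcases eq_or_ne hg.order ⊤ with h' | h'
  · rw [h', add_top, AnalyticAt.order_eq_top_iff]
    filter_upwards [hg.order_eq_top_iff.mp h'] with z h1
    show f z * g z = 0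
    rw [h1, mul_zero]
  have hm : hf.order = (hf.order.toNat : ℕ∞) := (ENat.coe_toNat h).symm
  have hk : hg.order = (hg.order.toNat : ℕ∞) := (ENat.coe_toNat h').symm
  set m := hf.order.toNat
  set k := hg.order.toNat
  obtain ⟨u, hu, hu0, hueq⟩ := (hf.order_eq_nat_iff m).mp hm
  obtain ⟨v, hv, hv0, hveq⟩ := (hg.order_eq_nat_iff k).mp hk
  rw [hm, hk, ← Nat.cast_add]
  refine ((hf.mul hg).order_eq_nat_iff (m + k)).mpr
    ⟨fun z => u z * v z, hu.mul hv, mul_ne_zero hu0 hv0, ?_⟩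
  filter_upwards [hueq, hveq] with z h1 h2
  show f z * g z = _
  rw [h1, h2]
  simp only [smul_eq_mul, pow_add]
  ring
-/

lemma one_le_radius {c : ℕ → ℂ} (C : ℝ) (hC : ∀ n, ‖c n‖ ≤ C) :
    1 ≤ (FormalMultilinearSeries.ofScalars ℂ c).radius := by
  have := FormalMultilinearSeries.le_radius_of_bound
    (FormalMultilinearSeries.ofScalars ℂ c) C (r := 1) fun n => by
      rw [FormalMultilinearSeries.ofScalars_norm]
      simpa using hC n
  simpa using this

lemma ofScalars_sum_eq_tsum (c : ℕ → ℂ) (w : ℂ) :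
    (FormalMultilinearSeries.ofScalars ℂ c).sum w = ∑' n : ℕ, c n * w ^ n := by
  refine tsum_congr fun n => ?_
  rw [FormalMultilinearSeries.ofScalars_apply_eq, smul_eq_mul]

lemma summable_coeff_pow {c : ℕ → ℂ} (C : ℝ) (hC : ∀ n, ‖c n‖ ≤ C) {w : ℂ} (hw : ‖w‖ < 1) :
    Summable fun n : ℕ => ‖c n * w ^ n‖ := by
  refine Summable.of_nonneg_of_le (fun n => norm_nonneg _) (fun n => ?_)
    ((summable_geometric_of_lt_one (norm_nonneg w) hw).mul_left C)
  rw [norm_mul, norm_pow]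
  exact mul_le_mul_of_nonneg_right (hC n) (by positivity)

end Stmt1Aux2
section Stmt1Aux3

open scoped ComplexConjugate

lemma negVanish_mul {f g : 𝕋 → ℂ} (hf2 : MemLp f 2 μT) (hg2 : MemLp g 2 μT)
    (hf : NegVanish f) (hg : NegVanish g) {n : ℤ} (hn : n < 0) :
    fourierCoeff (fun x => f x * g x) n = 0 := by
  rw [fourierCoeff_mul hf2 hg2]
  have : ∀ k : ℤ, fourierCoeff f (n - k) * fourierCoeff g k = 0 := by
    intro k
    rcases lt_or_ge k 0 with hk | hk
    · rw [hg k hk, mul_zero]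
    · rw [hf (n - k) (by omega), zero_mul]
  calc ∑' k : ℤ, fourierCoeff f (n - k) * fourierCoeff g k = ∑' _ : ℤ, (0 : ℂ) :=
        tsum_congr this
  _ = 0 := tsum_zero

lemma coeff_sq_eq {F : 𝕋 → ℂ} (hF2 : MemLp F 2 μT) (hFneg : NegVanish F) (n : ℕ) :
    fourierCoeff (fun x => F x * F x) (n : ℤ)
      = ∑ kl ∈ Finset.HasAntidiagonal.antidiagonal n,
          fourierCoeff F (kl.1 : ℤ) * fourierCoeff F (kl.2 : ℤ) := by
  classical
  rw [fourierCoeff_mul hF2 hF2]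
  have hsupp : ∀ k : ℤ,
      k ∉ (Finset.range (n + 1)).map ⟨(Nat.cast : ℕ → ℤ), fun _ _ h => by exact_mod_cast h⟩ →
      fourierCoeff F ((n : ℤ) - k) * fourierCoeff F k = 0 := by
    intro k hk
    rcases lt_or_ge k 0 with hk0 | hk0
    · rw [hFneg k hk0, mul_zero]
    · have hkn : (n : ℤ) < k := by
        by_contra hcon
        push_neg at hcon
        apply hk
        simp only [Finset.mem_map, Finset.mem_range, Function.Embedding.coeFn_mk]
        exact ⟨k.toNat, by omega, by change ((k.toNat : ℕ) : ℤ) = k; omega⟩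
      rw [hFneg ((n : ℤ) - k) (by omega), zero_mul]
  rw [tsum_eq_sum hsupp, Finset.sum_map]
  rw [Finset.Nat.sum_antidiagonal_eq_sum_range_succ
    (fun i j => fourierCoeff F (i : ℤ) * fourierCoeff F (j : ℤ)) n]
  refine Finset.sum_congr rfl fun k hk => ?_
  have hk' : k ≤ n := Nat.lt_succ_iff.mp (Finset.mem_range.mp hk)
  have e : ((n : ℤ)) - (k : ℤ) = ((n - k : ℕ) : ℤ) := by omega
  show fourierCoeff F ((n : ℤ) - (k : ℤ)) * fourierCoeff F (k : ℤ) = _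
  rw [e, mul_comm]

lemma integrable_fourier_smul (n : ℤ) {f : 𝕋 → ℂ} (hf : Integrable f μT) :
    Integrable (fun x => fourier (-n) x • f x) μT := by
  refine Integrable.mono' hf.norm
    ((map_continuous (fourier (-n))).aestronglyMeasurable.smul hf.aestronglyMeasurable)
    (Filter.Eventually.of_forall fun x => ?_)
  rw [norm_smul, norm_fourier_apply, one_mul]

lemma fourierCoeff_add {f g : 𝕋 → ℂ} (hf : Integrable f μT) (hg : Integrable g μT) (n : ℤ) :
    fourierCoeff (fun x => f x + g x) n = fourierCoeff f n + fourierCoeff g n := by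
  show ∫ x, fourier (-n) x • (f x + g x) ∂μT = _
  have : (fun x => fourier (-n) x • (f x + g x))
      = fun x => fourier (-n) x • f x + fourier (-n) x • g x := by
    funext x; rw [smul_add]
  rw [this, integral_add (integrable_fourier_smul n hf) (integrable_fourier_smul n hg)]
  rfl

lemma fourierCoeff_linear_mul {F : 𝕋 → ℂ} (hF : MemLp F 2 μT) (c₀ c₁ : ℂ) (n : ℤ) :
    fourierCoeff (fun x => (c₀ + c₁ * zf x) * F x) n
      = c₀ * fourierCoeff F n + c₁ * fourierCoeff F (n - 1) := by
  classical
  have hcont : Continuous fun x : 𝕋 => c₀ + c₁ * zf x :=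
    continuous_const.add (continuous_const.mul (map_continuous (fourier 1)))
  have hL2 : MemLp (fun x : 𝕋 => c₀ + c₁ * zf x) 2 μT :=
    (memLinf_of_continuous hcont).mono_exponent le_top
  rw [fourierCoeff_mul hL2 hF n]
  have hco : ∀ k : ℤ, fourierCoeff (fun x : 𝕋 => c₀ + c₁ * zf x) k
      = c₀ * (if k = 0 then 1 else 0) + c₁ * (if k = 1 then 1 else 0) := by
    intro k
    have e1 : (fun x : 𝕋 => c₀ + c₁ * zf x)
        = fun x : 𝕋 => (c₀ * fourier 0 x) + (c₁ * fourier 1 x) := by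
      funext x
      rw [fourier_zero, mul_one]
      rfl
    rw [e1, fourierCoeff_add (f := fun x => c₀ * fourier 0 x) (g := fun x => c₁ * fourier 1 x)
      (integrable_of_continuous (continuous_const.mul (map_continuous (fourier 0))))
      (integrable_of_continuous (continuous_const.mul (map_continuous (fourier 1)))),
      fourierCoeff.const_mul, fourierCoeff.const_mul,
      fourierCoeff_fourier' 0 k, fourierCoeff_fourier' 1 k]
  have hne : n ≠ n - 1 := by omega
  rw [tsum_eq_sum (s := {n, n - 1}) ?_]
  · rw [Finset.sum_pair hne, hco (n - n), hco (n - (n - 1))]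
    have e0 : n - n = (0 : ℤ) := by ring
    have e1 : n - (n - 1) = (1 : ℤ) := by ring
    rw [e0, e1]
    norm_num
  · intro k hk
    simp only [Finset.mem_insert, Finset.mem_singleton] at hk
    push_neg at hk
    rw [hco (n - k)]
    have h0 : n - k ≠ 0 := by omega
    have h1 : n - k ≠ 1 := by omega
    simp [h0, h1]

lemma tsum_if_shift {d : ℕ → ℂ} (hd : Summable d) :
    ∑' n : ℕ, (if n = 0 then (0 : ℂ) else d (n - 1)) = ∑' n : ℕ, d n := by
  have hsum : Summable fun n : ℕ => (if n = 0 then (0 : ℂ) else d (n - 1)) := by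
    rw [← summable_nat_add_iff 1]
    simpa using hd
  rw [Summable.tsum_eq_zero_add hsum]
  simp

lemma psum_sq {c : ℕ → ℂ} (C : ℝ) (hC : ∀ n, ‖c n‖ ≤ C) {w : ℂ} (hw : ‖w‖ < 1) :
    (∑' n : ℕ, c n * w ^ n) * (∑' n : ℕ, c n * w ^ n)
      = ∑' n : ℕ, (∑ kl ∈ Finset.HasAntidiagonal.antidiagonal n, c kl.1 * c kl.2) * w ^ n := by
  rw [tsum_mul_tsum_eq_tsum_sum_antidiagonal_of_summable_norm
    (summable_coeff_pow C hC hw) (summable_coeff_pow C hC hw)]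
  refine tsum_congr fun n => ?_
  rw [Finset.sum_mul]
  refine Finset.sum_congr rfl fun kl hkl => ?_
  have hkl' : kl.1 + kl.2 = n := Finset.HasAntidiagonal.mem_antidiagonal.mp hkl
  rw [← hkl', pow_add]
  ring

lemma linear_comb_eval {a : ℤ → ℂ} (C : ℝ) (hC : ∀ n : ℤ, ‖a n‖ ≤ C) (hneg : a (-1) = 0)
    (c₀ c₁ : ℂ) {w : ℂ} (hw : ‖w‖ < 1) :
    ∑' n : ℕ, (c₀ * a (n : ℤ) + c₁ * a ((n : ℤ) - 1)) * w ^ n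
      = (c₀ + c₁ * w) * ∑' n : ℕ, a (n : ℤ) * w ^ n := by
  have hs : Summable fun n : ℕ => a (n : ℤ) * w ^ n :=
    (summable_coeff_pow C (fun n => hC _) hw).of_norm
  have hshift_sum : Summable fun n : ℕ => a ((n : ℤ) - 1) * w ^ n :=
    (summable_coeff_pow (c := fun n : ℕ => a ((n : ℤ) - 1)) C (fun n => hC _) hw).of_norm
  have hs1 : Summable fun n : ℕ => c₀ * (a (n : ℤ) * w ^ n) := hs.mul_left c₀
  have hs2 : Summable fun n : ℕ => c₁ * (a ((n : ℤ) - 1) * w ^ n) := hshift_sum.mul_left c₁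
  have split : ∑' n : ℕ, (c₀ * a (n : ℤ) + c₁ * a ((n : ℤ) - 1)) * w ^ n
      = c₀ * ∑' n : ℕ, a (n : ℤ) * w ^ n + c₁ * ∑' n : ℕ, a ((n : ℤ) - 1) * w ^ n := by
    rw [← tsum_mul_left, ← tsum_mul_left, ← Summable.tsum_add hs1 hs2]
    exact tsum_congr fun n => by ring
  rw [split]
  have hshift : ∑' n : ℕ, a ((n : ℤ) - 1) * w ^ n = w * ∑' n : ℕ, a (n : ℤ) * w ^ n := by
    set d : ℕ → ℂ := fun m => a (m : ℤ) * w ^ (m + 1) with hd_def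
    have hd : Summable d := by
      refine (hs.mul_left w).congr fun m => ?_
      rw [hd_def]
      show w * (a (m : ℤ) * w ^ m) = a (m : ℤ) * w ^ (m + 1)
      ring
    have ht : ∀ n : ℕ, a ((n : ℤ) - 1) * w ^ n = (if n = 0 then (0 : ℂ) else d (n - 1)) := by
      intro n
      cases n with
      | zero => simp [hneg]
      | succ m =>
        have e : ((m + 1 : ℕ) : ℤ) - 1 = (m : ℤ) := by push_cast; ring
        simp only [if_neg (Nat.succ_ne_zero m), Nat.succ_sub_one, hd_def]
        rw [e]
    rw [tsum_congr ht, tsum_if_shift hd]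
    rw [← tsum_mul_left]
    exact tsum_congr fun n => by rw [hd_def]; show a (n : ℤ) * w ^ (n + 1) = w * (a (n : ℤ) * w ^ n); ring
  rw [hshift]
  ring

end Stmt1Aux3
/-- a square root of a Blaschke factor is not of bounded type. -/
theorem stmt1 (α : ℂ) (hα : ‖α‖ < 1) (φ : 𝕋 → ℂ) (hmeas : Measurable φ)
    (hsq : ∀ᵐ x ∂μT, φ x ^ 2 = (zf x - α) / (1 - (starRingEnd ℂ) α * zf x)) :
    ¬ BddType φ := by
  classical
  rintro ⟨g, h, hg, hh, hh0, hφ⟩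
  set A : ℂ := (starRingEnd ℂ) α with hA_def
  have habsA : ‖A‖ = ‖α‖ := Complex.norm_conj α
  -- pointwise nonvanishing of numerator and denominator of the Blaschke factor
  have hden : ∀ x : 𝕋, (1 : ℂ) - A * zf x ≠ 0 := by
    intro x hx
    have h1 : ‖A * zf x‖ = ‖α‖ := by
      rw [norm_mul, abs_zf_eq_one, mul_one, habsA]
    have h2 : (1 : ℂ) = A * zf x := sub_eq_zero.mp hx
    rw [← h2, norm_one] at h1
    exact absurd h1.symm (ne_of_lt hα)
  have hnum : ∀ x : 𝕋, zf x - α ≠ 0 := by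
    intro x hx
    have h1 := abs_zf_eq_one x
    rw [sub_eq_zero.mp hx] at h1
    exact absurd h1 (ne_of_lt hα)
  -- membership facts
  have hg2 : MemLp g 2 μT := hg.1.mono_exponent le_top
  have hh2 : MemLp h 2 μT := hh.1.mono_exponent le_top
  have hgg2 : MemLp (fun x => g x * g x) 2 μT := memL2_of_mul_top hg.1 hg2
  have hhh2 : MemLp (fun x => h x * h x) 2 μT := memL2_of_mul_top hh.1 hh2
  -- the key a.e. identity
  have hPQ : (fun x => (1 + (-A) * zf x) * (g x * g x)) =ᵐ[μT]
      (fun x => ((-α) + 1 * zf x) * (h x * h x)) := by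
    filter_upwards [hφ, hsq] with x h1 h2
    have hhx : h x ≠ 0 := by
      intro h0
      have hφ0 : φ x = 0 := by rw [h1, h0, div_zero]
      rw [hφ0] at h2
      have h3 : (zf x - α) / (1 - A * zf x) = 0 := by
        rw [← h2]; ring
      rcases div_eq_zero_iff.mp h3 with h4 | h4
      · exact hnum x h4
      · exact hden x h4
    have hgx : g x = φ x * h x := by
      rw [h1]
      field_simp
    have key : g x * g x = ((zf x - α) / (1 - A * zf x)) * (h x * h x) := by
      rw [hgx, ← h2]
      ring
    have main : (1 - A * zf x) * (g x * g x) = (zf x - α) * (h x * h x) := by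
      rw [key]
      field_simp
      exact mul_div_cancel_left₀ _ (hden x)
    calc (1 + (-A) * zf x) * (g x * g x) = (1 - A * zf x) * (g x * g x) := by ring
    _ = (zf x - α) * (h x * h x) := main
    _ = ((-α) + 1 * zf x) * (h x * h x) := by ring
  -- coefficient sequences
  set a : ℤ → ℂ := fun n => fourierCoeff (fun x => g x * g x) n with ha_def
  set b : ℤ → ℂ := fun n => fourierCoeff (fun x => h x * h x) n with hb_def
  have hcoeff : ∀ n : ℤ, 1 * a n + (-A) * a (n - 1) = (-α) * b n + 1 * b (n - 1) := by
    intro n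
    have e1 := fourierCoeff_linear_mul hgg2 1 (-A) n
    have e2 := fourierCoeff_linear_mul hhh2 (-α) 1 n
    rw [← e1, ← e2]
    exact fourierCoeff_congr_ae hPQ n
  have haneg : a (-1) = 0 := negVanish_mul hg2 hg2 hg.2 hg.2 (by norm_num)
  have hbneg : b (-1) = 0 := negVanish_mul hh2 hh2 hh.2 hh.2 (by norm_num)
  -- bounds
  set Ca : ℝ := ∫ x, ‖g x * g x‖ ∂μT with hCa_def
  set Cb : ℝ := ∫ x, ‖h x * h x‖ ∂μT with hCb_def
  set Cg : ℝ := ∫ x, ‖g x‖ ∂μT with hCg_def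
  set Ch : ℝ := ∫ x, ‖h x‖ ∂μT with hCh_def
  have hCa : ∀ n : ℤ, ‖a n‖ ≤ Ca := fun n => norm_fourierCoeff_le _ n
  have hCb : ∀ n : ℤ, ‖b n‖ ≤ Cb := fun n => norm_fourierCoeff_le _ n
  set cg : ℕ → ℂ := fun n => fourierCoeff g (n : ℤ) with hcg_def
  set ch : ℕ → ℂ := fun n => fourierCoeff h (n : ℤ) with hch_def
  have hCg : ∀ n : ℕ, ‖cg n‖ ≤ Cg := fun n => norm_fourierCoeff_le _ _
  have hCh : ∀ n : ℕ, ‖ch n‖ ≤ Ch := fun n => norm_fourierCoeff_le _ _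
  -- power series
  set pg := FormalMultilinearSeries.ofScalars ℂ cg with hpg_def
  set ph := FormalMultilinearSeries.ofScalars ℂ ch with hph_def
  have hrg : 1 ≤ pg.radius := one_le_radius Cg hCg
  have hrh : 1 ≤ ph.radius := one_le_radius Ch hCh
  have hballg : HasFPowerSeriesOnBall pg.sum pg 0 pg.radius :=
    pg.hasFPowerSeriesOnBall (lt_of_lt_of_le zero_lt_one hrg)
  have hballh : HasFPowerSeriesOnBall ph.sum ph 0 ph.radius :=
    ph.hasFPowerSeriesOnBall (lt_of_lt_of_le zero_lt_one hrh)
  -- value identities on the unit ball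
  have hSa : ∀ w : ℂ, ‖w‖ < 1 → pg.sum w * pg.sum w = ∑' n : ℕ, a (n : ℤ) * w ^ n := by
    intro w hw
    rw [hpg_def, ofScalars_sum_eq_tsum, psum_sq Cg hCg hw]
    exact tsum_congr fun n => congrArg (· * w ^ n) (coeff_sq_eq hg2 hg.2 n).symm
  have hSb : ∀ w : ℂ, ‖w‖ < 1 → ph.sum w * ph.sum w = ∑' n : ℕ, b (n : ℤ) * w ^ n := by
    intro w hw
    rw [hph_def, ofScalars_sum_eq_tsum, psum_sq Ch hCh hw]
    exact tsum_congr fun n => congrArg (· * w ^ n) (coeff_sq_eq hh2 hh.2 n).symm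
  have main_eq : ∀ w : ℂ, ‖w‖ < 1 →
      (1 - A * w) * (pg.sum w * pg.sum w) = (w - α) * (ph.sum w * ph.sum w) := by
    intro w hw
    rw [hSa w hw, hSb w hw]
    have e1 := linear_comb_eval (a := a) Ca hCa haneg 1 (-A) hw
    have e2 := linear_comb_eval (a := b) Cb hCb hbneg (-α) 1 hw
    have e12 : (∑' n : ℕ, (1 * a (n : ℤ) + (-A) * a ((n : ℤ) - 1)) * w ^ n)
        = ∑' n : ℕ, ((-α) * b (n : ℤ) + 1 * b ((n : ℤ) - 1)) * w ^ n :=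
      tsum_congr fun n => by rw [hcoeff (n : ℤ)]
    have emain : (1 + (-A) * w) * ∑' n : ℕ, a (n : ℤ) * w ^ n
        = ((-α) + 1 * w) * ∑' n : ℕ, b (n : ℤ) * w ^ n := by
      rw [← e1, e12, e2]
    calc (1 - A * w) * ∑' n : ℕ, a (n : ℤ) * w ^ n
        = (1 + (-A) * w) * ∑' n : ℕ, a (n : ℤ) * w ^ n := by ring
    _ = ((-α) + 1 * w) * ∑' n : ℕ, b (n : ℤ) * w ^ n := emain
    _ = (w - α) * ∑' n : ℕ, b (n : ℤ) * w ^ n := by ring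
  -- analyticity at α
  have hα' : ‖α‖ < 1 := hα
  have hmemg : α ∈ EMetric.ball (0 : ℂ) pg.radius := by
    rw [EMetric.ball, Metric.mem_eball, edist_zero_right]
    refine lt_of_lt_of_le ?_ hrg
    rw [← ofReal_norm, ENNReal.ofReal_lt_one]
    simpa using hα'
  have hmemh : α ∈ EMetric.ball (0 : ℂ) ph.radius := by
    rw [EMetric.ball, Metric.mem_eball, edist_zero_right]
    refine lt_of_lt_of_le ?_ hrh
    rw [← ofReal_norm, ENNReal.ofReal_lt_one]
    simpa using hα'
  have hg_an : AnalyticAt ℂ pg.sum α := hballg.analyticAt_of_mem hmemg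
  have hh_an : AnalyticAt ℂ ph.sum α := hballh.analyticAt_of_mem hmemh
  have hAn1 : AnalyticAt ℂ (fun w : ℂ => 1 - A * w) α :=
    analyticAt_const.sub (analyticAt_const.mul analyticAt_id)
  have hAn2 : AnalyticAt ℂ (fun w : ℂ => w - α) α := analyticAt_id.sub analyticAt_const
  have hF : AnalyticAt ℂ (fun w : ℂ => (1 - A * w) * (pg.sum w * pg.sum w)) α :=
    hAn1.mul (hg_an.mul hg_an)
  have hG : AnalyticAt ℂ (fun w : ℂ => (w - α) * (ph.sum w * ph.sum w)) α :=
    hAn2.mul (hh_an.mul hh_an)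
  have hFG : (fun w : ℂ => (1 - A * w) * (pg.sum w * pg.sum w))
      =ᶠ[nhds α] fun w : ℂ => (w - α) * (ph.sum w * ph.sum w) := by
    have hball : Metric.ball (0 : ℂ) 1 ∈ nhds α :=
      (Metric.isOpen_ball).mem_nhds (by simpa [Metric.mem_ball, dist_zero_right] using hα')
    filter_upwards [hball] with w hw
    exact main_eq w (by simpa [Metric.mem_ball, dist_zero_right] using hw)
  -- compute the orders
  have h1 : analyticOrderAt (fun w : ℂ => 1 - A * w) α = (0 : ℕ∞) := by
    refine (hAn1.analyticOrderAt_eq_natCast (n := 0)).mpr ⟨fun w : ℂ => 1 - A * w, hAn1, ?_, ?_⟩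
    · intro hcon
      have hcon' : (1 : ℂ) - A * α = 0 := hcon
      have h2 : (1 : ℂ) = A * α := sub_eq_zero.mp hcon'
      have h3 : ‖A * α‖ = ‖α‖ * ‖α‖ := by
        rw [norm_mul, habsA]
      rw [← h2, norm_one] at h3
      nlinarith [norm_nonneg α]
    · filter_upwards with w
      simp
  have h2 : analyticOrderAt (fun w : ℂ => w - α) α = (1 : ℕ∞) := by
    refine (hAn2.analyticOrderAt_eq_natCast (n := 1)).mpr ⟨fun _ : ℂ => 1, analyticAt_const, one_ne_zero, ?_⟩
    filter_upwards with w
    simp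
  have heq : (0 : ℕ∞) + ((analyticOrderAt pg.sum α) + (analyticOrderAt pg.sum α))
      = (1 : ℕ∞) + ((analyticOrderAt ph.sum α) + (analyticOrderAt ph.sum α)) := by
    rw [← h1, ← h2, ← analytic_order_mul hg_an hg_an, ← analytic_order_mul hh_an hh_an,
      ← analytic_order_mul hAn1 (g := fun z => pg.sum z * pg.sum z) (hg_an.mul hg_an),
      ← analytic_order_mul hAn2 (g := fun z => ph.sum z * ph.sum z) (hh_an.mul hh_an)]
    exact analytic_order_congr hF hG hFG
  -- parity forces the order of Sh at α to be infinite
  have hytop : (analyticOrderAt ph.sum α) = ⊤ := by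
    by_contra hy
    have hky : (analyticOrderAt ph.sum α) = ((analyticOrderAt ph.sum α).toNat : ℕ∞) := (ENat.coe_toNat hy).symm
    rcases eq_or_ne (analyticOrderAt pg.sum α) ⊤ with hx | hx
    · rw [hx, hky] at heq
      have htop : (1 : ℕ∞) + (((analyticOrderAt ph.sum α).toNat : ℕ∞) + ((analyticOrderAt ph.sum α).toNat : ℕ∞)) ≠ ⊤ := by
        have hne : ((1 + ((analyticOrderAt ph.sum α).toNat + (analyticOrderAt ph.sum α).toNat) : ℕ) : ℕ∞) ≠ ⊤ :=
          ENat.coe_ne_top _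
        simpa [Nat.cast_add] using hne
      apply htop
      rw [← heq]
      simp
    · have hkx : (analyticOrderAt pg.sum α) = ((analyticOrderAt pg.sum α).toNat : ℕ∞) := (ENat.coe_toNat hx).symm
      rw [hkx, hky] at heq
      set m := (analyticOrderAt pg.sum α).toNat
      set k := (analyticOrderAt ph.sum α).toNat
      have : ((m + m : ℕ) : ℕ∞) = ((1 + (k + k) : ℕ) : ℕ∞) := by push_cast; simpa using heq
      have := Nat.cast_inj.mp this
      omega
  -- Sh vanishes identically on the unit ball
  have hev : ph.sum =ᶠ[nhds α] 0 := by
    have := analyticOrderAt_eq_top.mp hytop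
    filter_upwards [this] with w hw
    exact hw
  have hANN : AnalyticOnNhd ℂ ph.sum (Metric.ball (0 : ℂ) 1) := by
    intro w hw
    refine hballh.analyticAt_of_mem ?_
    rw [Metric.mem_eball, edist_zero_right]
    refine lt_of_lt_of_le ?_ hrh
    rw [← ofReal_norm, ENNReal.ofReal_lt_one]
    simpa using (by simpa [Metric.mem_ball, dist_zero_right] using hw : ‖w‖ < 1)
  have hzero : Set.EqOn ph.sum 0 (Metric.ball (0 : ℂ) 1) :=
    hANN.eqOn_zero_of_preconnected_of_eventuallyEq_zero
      (convex_ball (0 : ℂ) 1).isPreconnected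
      (by simpa [Metric.mem_ball, dist_zero_right] using hα') hev
  have hev0 : ph.sum =ᶠ[nhds (0 : ℂ)] 0 := by
    have hball : Metric.ball (0 : ℂ) 1 ∈ nhds (0 : ℂ) :=
      (Metric.isOpen_ball).mem_nhds (by simp [Metric.mem_ball])
    filter_upwards [hball] with w hw
    exact hzero hw
  have hp0 : ph = 0 := hballh.hasFPowerSeriesAt.eq_zero_of_eventually hev0
  have hch0 : ∀ n : ℕ, ch n = 0 := by
    have := (FormalMultilinearSeries.ofScalars_series_eq_zero (𝕜 := ℂ) ℂ).mp (hph_def ▸ hp0)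
    intro n
    exact congrFun this n
  have hcoefh : ∀ n : ℤ, fourierCoeff h n = 0 := by
    intro n
    rcases lt_or_ge n 0 with hn | hn
    · exact hh.2 n hn
    · have : n = ((n.toNat : ℕ) : ℤ) := by omega
      rw [this]
      exact hch0 n.toNat
  exact hh0 (ae_zero_of_coeff_zero hh2 hcoefh)
end HankelPaper
end
end

section
/- If h ∈ H² and f ∈ H² satisfy h² = z f² a.e. on the unit circle, then f = h = 0. -/
open MeasureTheory Complex Filter Matrix

noncomputable section

namespace HankelPaper

lemma coeff_congr {g₁ g₂ : 𝕋 → ℂ} (hgg : g₁ =ᵐ[μT] g₂) (n : ℤ) :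
    fourierCoeff g₁ n = fourierCoeff g₂ n := by
  unfold fourierCoeff
  apply integral_congr_ae
  filter_upwards [hgg] with x hx
  rw [hx]

lemma eq_zero_of_coeff {g : 𝕋 → ℂ} (hg : MemLp g 2 μT) (hz : ∀ n : ℤ, fourierCoeff g n = 0) :
    g =ᵐ[μT] 0 := by
  set G := hg.toLp g with hG
  have h1 : fourierBasis.repr G = 0 := by
    ext n
    rw [fourierBasis_repr, coeff_congr hg.coeFn_toLp n, hz n]
    simp
  have h2 : G = 0 := fourierBasis.repr.injective (by rw [h1, map_zero])
  calc g =ᵐ[μT] G := hg.coeFn_toLp.symm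
    _ =ᵐ[μT] 0 := by rw [h2]; exact Lp.coeFn_zero _ _ _

-- multiplication formula
lemma coeff_mul {g₁ g₂ : 𝕋 → ℂ} (h1 : MemLp g₁ 2 μT) (h2 : MemLp g₂ 2 μT) (n : ℤ) :
    fourierCoeff (fun x => g₁ x * g₂ x) n
      = ∑' k : ℤ, fourierCoeff g₁ (n - k) * fourierCoeff g₂ k := by
  classical
  set u : 𝕋 → ℂ := fun x => (starRingEnd ℂ) (g₁ x) * fourier n x with hu
  have hum : MemLp u 2 μT := by
    apply MemLp.of_le h1 ?_ ?_
    · exact (Complex.continuous_conj.comp_aestronglyMeasurable h1.aestronglyMeasurable).mul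
        ((fourier n).continuous.aestronglyMeasurable)
    · filter_upwards with x
      simp [u, norm_mul, Circle.norm_coe]
  set U := hum.toLp u
  set G₂ := h2.toLp g₂
  have key : @inner ℂ _ _ U G₂ = ∑' k : ℤ, (starRingEnd ℂ) (fourierBasis.repr U k) * fourierBasis.repr G₂ k := by
    rw [← fourierBasis.tsum_inner_mul_inner U G₂]
    congr 1; funext k
    rw [fourierBasis.repr_apply_apply, fourierBasis.repr_apply_apply, ← inner_conj_symm U]
  have reprU : ∀ k : ℤ, fourierBasis.repr U k = (starRingEnd ℂ) (fourierCoeff g₁ (n - k)) := by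
    intro k
    rw [fourierBasis_repr, coeff_congr hum.coeFn_toLp k]
    unfold fourierCoeff
    rw [← integral_conj]
    apply integral_congr_ae
    filter_upwards with x
    simp only [u, smul_eq_mul, _root_.map_mul, Complex.conj_conj, ← fourier_neg]
    have hnk : (- -(n - k)) = -k + n := by ring
    rw [hnk, fourier_add]
    ring
  have reprG : ∀ k : ℤ, fourierBasis.repr G₂ k = fourierCoeff g₂ k := by
    intro k
    rw [fourierBasis_repr, coeff_congr h2.coeFn_toLp k]
  have lhs : @inner ℂ _ _ U G₂ = fourierCoeff (fun x => g₁ x * g₂ x) n := by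
    rw [MeasureTheory.L2.inner_def]
    unfold fourierCoeff
    apply integral_congr_ae
    filter_upwards [hum.coeFn_toLp, h2.coeFn_toLp] with x hx1 hx2
    rw [hx1, hx2]
    simp only [RCLike.inner_apply, u, smul_eq_mul, _root_.map_mul, Complex.conj_conj, ← fourier_neg]
    ring
  rw [← lhs, key]
  congr 1; funext k
  rw [reprU k, reprG k, Complex.conj_conj]

lemma coeff_zmul (g : 𝕋 → ℂ) (n : ℤ) :
    fourierCoeff (fun x => fourier 1 x * g x) n = fourierCoeff g (n - 1) := by
  unfold fourierCoeff
  refine integral_congr_ae (Eventually.of_forall fun x => ?_)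
  simp only [smul_eq_mul]
  rw [show (-(n - 1)) = -n + 1 by ring, fourier_add]
  ring

lemma coeff_sq_below {g : 𝕋 → ℂ} (hg : MemLp g 2 μT) (a : ℤ)
    (hvan : ∀ k : ℤ, k < a → fourierCoeff g k = 0) :
    (∀ m : ℤ, m < 2 * a → fourierCoeff (fun x => g x * g x) m = 0) ∧
      fourierCoeff (fun x => g x * g x) (2 * a) = fourierCoeff g a ^ 2 := by
  constructor
  · intro m hm
    rw [coeff_mul hg hg]
    have hterm : ∀ k : ℤ, fourierCoeff g (m - k) * fourierCoeff g k = 0 := by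
      intro k
      rcases lt_or_ge k a with hk | hk
      · rw [hvan k hk, mul_zero]
      · rw [hvan (m - k) (by omega), zero_mul]
    simp [hterm]
  · rw [coeff_mul hg hg, tsum_eq_single a]
    · rw [show 2 * a - a = a by ring]; ring
    · intro k hk
      rcases lt_or_ge k a with h' | h'
      · rw [hvan k h', mul_zero]
      · rw [hvan (2 * a - k) (by omega), zero_mul]

/-- if `h, f ∈ H²` and `h² = z f²` a.e. then `f = h = 0`. -/
theorem stmt2 (h f : 𝕋 → ℂ) (hh : MemH2 h) (hf : MemH2 f)
    (heq : ∀ᵐ x ∂μT, h x ^ 2 = zf x * f x ^ 2) :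
    f =ᵐ[μT] 0 ∧ h =ᵐ[μT] 0 := by
  classical
  have hzf_ne : ∀ x : 𝕋, zf x ≠ 0 := by
    intro x
    simp only [zf, fourier_apply]
    exact Circle.coe_ne_zero _
  have hmain : f =ᵐ[μT] 0 := by
    by_contra hfne
    have hhne : ¬ h =ᵐ[μT] 0 := by
      intro hh0
      apply hfne
      filter_upwards [heq, hh0] with x hx hx0
      have : zf x * f x ^ 2 = 0 := by rw [← hx, hx0]; simp
      rcases mul_eq_zero.1 this with h' | h'
      · exact absurd h' (hzf_ne x)
      · exact pow_eq_zero_iff (two_ne_zero) |>.1 h'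
    -- minimal nonzero coefficient of f
    have hfex : ∃ m : ℕ, fourierCoeff f (m : ℤ) ≠ 0 := by
      by_contra hc
      push_neg at hc
      apply hfne
      apply eq_zero_of_coeff hf.1
      intro n
      rcases lt_or_ge n 0 with hn | hn
      · exact hf.2 n hn
      · have := hc n.toNat
        rwa [Int.toNat_of_nonneg hn] at this
    have hhex : ∃ m : ℕ, fourierCoeff h (m : ℤ) ≠ 0 := by
      by_contra hc
      push_neg at hc
      apply hhne
      apply eq_zero_of_coeff hh.1
      intro n
      rcases lt_or_ge n 0 with hn | hn
      · exact hh.2 n hn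
      · have := hc n.toNat
        rwa [Int.toNat_of_nonneg hn] at this
    set b := Nat.find hfex with hb
    set a := Nat.find hhex with ha
    have hfb : fourierCoeff f (b : ℤ) ≠ 0 := Nat.find_spec hfex
    have hha : fourierCoeff h (a : ℤ) ≠ 0 := Nat.find_spec hhex
    have hfvan : ∀ k : ℤ, k < (b : ℤ) → fourierCoeff f k = 0 := by
      intro k hk
      rcases lt_or_ge k 0 with h' | h'
      · exact hf.2 k h'
      · have h2 : k.toNat < b := by omega
        have := Nat.find_min hfex h2
        simp only [not_not] at this
        rwa [Int.toNat_of_nonneg h'] at this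
    have hhvan : ∀ k : ℤ, k < (a : ℤ) → fourierCoeff h k = 0 := by
      intro k hk
      rcases lt_or_ge k 0 with h' | h'
      · exact hh.2 k h'
      · have h2 : k.toNat < a := by omega
        have := Nat.find_min hhex h2
        simp only [not_not] at this
        rwa [Int.toNat_of_nonneg h'] at this
    obtain ⟨Hbelow, Hat⟩ := coeff_sq_below hh.1 (a : ℤ) hhvan
    obtain ⟨Fbelow, Fat⟩ := coeff_sq_below hf.1 (b : ℤ) hfvan
    have hcoeq : ∀ m : ℤ, fourierCoeff (fun x => h x * h x) m
        = fourierCoeff (fun x => f x * f x) (m - 1) := by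
      intro m
      have e1 : fourierCoeff (fun x => h x * h x) m = fourierCoeff (fun x => h x ^ 2) m :=
        coeff_congr (Eventually.of_forall fun x => by ring) m
      have e2 : fourierCoeff (fun x => h x ^ 2) m
          = fourierCoeff (fun x => zf x * f x ^ 2) m := coeff_congr heq m
      have e3 : fourierCoeff (fun x => zf x * f x ^ 2) m
          = fourierCoeff (fun x => f x ^ 2) (m - 1) := coeff_zmul _ m
      have e4 : fourierCoeff (fun x => f x ^ 2) (m - 1)
          = fourierCoeff (fun x => f x * f x) (m - 1) :=
        coeff_congr (Eventually.of_forall fun x => by ring) (m - 1)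
      rw [e1, e2, e3, e4]
    rcases lt_trichotomy (2 * (a : ℤ)) (2 * (b : ℤ) + 1) with hab | hab | hab
    · have h1 := hcoeq (2 * (a : ℤ))
      rw [Hat, Fbelow (2 * (a : ℤ) - 1) (by omega)] at h1
      exact hha (pow_eq_zero_iff two_ne_zero |>.1 h1)
    · omega
    · have h1 := hcoeq (2 * (b : ℤ) + 1)
      rw [Hbelow (2 * (b : ℤ) + 1) (by omega), show 2 * (b : ℤ) + 1 - 1 = 2 * b by ring,
        Fat] at h1
      exact hfb (pow_eq_zero_iff two_ne_zero |>.1 h1.symm)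
  refine ⟨hmain, ?_⟩
  filter_upwards [heq, hmain] with x hx hx0
  have : h x ^ 2 = 0 := by rw [hx, hx0]; simp
  exact pow_eq_zero_iff two_ne_zero |>.1 this

end HankelPaper
end
end
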